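/- arXiv:2207.13951 — 3 statements merged into one kernel-verified Lean document; each statement's English description precedes it below -/
import Mathlib

section
/- Let (V,q) be a non-degenerate quadratic space over k and let (W,p) be a quadratic space over k with dim_k W ≤ ℵ₀. Then there exists an embedding of quadratic spaces W → V, i.e., a k-linear map φ : W → V with q(φ(w)) = p(w) for all w ∈ W. -/
open scoped BigOperators

/-- The submodule of quadratic forms of finite strength: those expressible as a finite
sum of products of two linear forms. -/
def FinStrength (k V : Type*) [Field k] [AddCommGroup V] [Module k V] :
    Submodule k (QuadraticForm k V) where
  carrier := {q | ∃ (n : ℕ) (l m : Fin n → V →ₗ[k] k), ∀ x, q x = ∑ i, l i x * m i x}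
  zero_mem' := ⟨0, ![], ![], fun x => by simp⟩
  add_mem' := by
    rintro q q' ⟨n, l, m, h⟩ ⟨n', l', m', h'⟩
    refine ⟨n + n', Fin.append l l', Fin.append m m', fun x => ?_⟩
    simp [Fin.sum_univ_add, Fin.append_left, Fin.append_right, h, h']
  smul_mem' := by
    rintro c q ⟨n, l, m, h⟩
    refine ⟨n, fun i => c • l i, m, fun x => ?_⟩
    simp [h, Finset.mul_sum, mul_assoc, smul_eq_mul]

namespace QuadEmbedAux

variable {k V : Type*} [Field k] [AddCommGroup V] [Module k V]

lemma mul_mem_finStrength {q : QuadraticForm k V} (l m : V →ₗ[k] k)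
    (h : ∀ x, q x = l x * m x) : q ∈ FinStrength k V :=
  ⟨1, ![l], ![m], fun x => by simp [h]⟩

section Invertible

variable [Invertible (2 : k)]

/-- The symmetric bilinear form associated to a quadratic form. -/
noncomputable def Bl (q : QuadraticForm k V) : LinearMap.BilinMap k V k :=
  QuadraticMap.associated (R := k) q

lemma Bl_self (q : QuadraticForm k V) (x : V) : Bl q x x = q x :=
  QuadraticMap.associated_eq_self_apply k q x

lemma Bl_symm (q : QuadraticForm k V) (x y : V) : Bl q x y = Bl q y x :=
  (QuadraticMap.associated_isSymm k q) x y

lemma q_apply_add (q : QuadraticForm k V) (x y : V) :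
    q (x + y) = q x + 2 * Bl q x y + q y := by
  have h := Bl_self q (x + y)
  simp only [map_add, LinearMap.add_apply] at h
  rw [Bl_self, Bl_self, Bl_symm q y x] at h
  rw [← h]; ring

lemma q_apply_smul_add (q : QuadraticForm k V) (t : k) (z x : V) :
    q (x + t • z) = q x + 2 * t * Bl q x z + t ^ 2 * q z := by
  rw [q_apply_add]
  simp only [map_smul, smul_eq_mul, QuadraticMap.map_smul]
  ring

/-- Lemma A : the difference between `q` and its composition with a one-dimensional
projection-like map is a single product of linear forms. -/
lemma sub_comp_mem_finStrength (q : QuadraticForm k V) (l : V →ₗ[k] k) (v : V) :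
    (q - q.comp (LinearMap.id - l.smulRight v) : QuadraticForm k V) ∈ FinStrength k V := by
  apply mul_mem_finStrength l ((2 : k) • ((Bl q).flip v) - (q v) • l)
  intro x
  simp only [QuadraticMap.sub_apply, QuadraticMap.comp_apply, LinearMap.sub_apply,
    LinearMap.id_apply, LinearMap.smulRight_apply, LinearMap.smul_apply, LinearMap.flip_apply,
    smul_eq_mul]
  rw [sub_eq_add_neg x (l x • v), ← neg_smul, q_apply_smul_add]
  show _ = l x * (2 * Bl q x v - q v * l x)
  ring

/-- Lemma C (universal form): a quadratic form vanishing on the common kernel of finitely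
many linear forms has finite strength. -/
lemma finStrength_of_vanishing :
    ∀ (n : ℕ) (q : QuadraticForm k V) (l : Fin n → V →ₗ[k] k),
      (∀ z, (∀ i, l i z = 0) → q z = 0) → q ∈ FinStrength k V := by
  intro n
  induction n with
  | zero =>
    intro q l h
    have : q = 0 := QuadraticMap.ext fun z => h z (fun i => i.elim0)
    rw [this]
    exact (FinStrength k V).zero_mem
  | succ n ih =>
    intro q l h
    by_cases h0 : l 0 = 0
    · refine ih q (fun i => l i.succ) ?_
      intro z hz
      refine h z ?_
      intro i
      refine Fin.cases ?_ ?_ i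
      · simp [h0]
      · exact hz
    · obtain ⟨x, hx⟩ : ∃ x, l 0 x ≠ 0 := by
        by_contra hc
        push_neg at hc
        exact h0 (LinearMap.ext fun x => by simp [hc x])
      set u := (l 0 x)⁻¹ • x with hu_def
      have hu : l 0 u = 1 := by
        rw [hu_def, map_smul, smul_eq_mul, inv_mul_cancel₀ hx]
      set f := (LinearMap.id - (l 0).smulRight u : V →ₗ[k] V) with hf_def
      have hker : ∀ z, l 0 (f z) = 0 := by
        intro z
        simp [hf_def, hu]
      have hcomp : q.comp f ∈ FinStrength k V := by
        refine ih (q.comp f) (fun i => (l i.succ).comp f) ?_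
        intro z hz
        rw [QuadraticMap.comp_apply]
        refine h (f z) ?_
        intro i
        refine Fin.cases ?_ ?_ i
        · exact hker z
        · intro j
          simpa using hz j
      have hsum := (FinStrength k V).add_mem (sub_comp_mem_finStrength q (l 0) u) hcomp
      rw [← hf_def] at hsum
      rwa [sub_add_cancel] at hsum

lemma exists_qne {q : QuadraticForm k V} (hq : q ∉ FinStrength k V)
    {n : ℕ} (l : Fin n → V →ₗ[k] k) :
    ∃ z, (∀ i, l i z = 0) ∧ q z ≠ 0 := by
  by_contra hc
  push_neg at hc
  exact hq (finStrength_of_vanishing n q l hc)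

end Invertible

/-- Lemma D : linearly independent functionals take arbitrary prescribed values. -/
lemma exists_dual_targets :
    ∀ {n : ℕ} {l : Fin n → V →ₗ[k] k}, LinearIndependent k l →
      ∀ b : Fin n → k, ∃ v, ∀ i, l i v = b i := by
  intro n
  induction n with
  | zero => exact fun _ b => ⟨0, fun i => i.elim0⟩
  | succ n ih =>
    intro l hl b
    have hsnoc := linearIndependent_fin_snoc.mp (by rw [Fin.snoc_init_self]; exact hl)
    obtain ⟨v0, hv0'⟩ := ih hsnoc.1 (fun i => b i.castSucc)
    have hv0 : ∀ j : Fin n, l j.castSucc v0 = b j.castSucc := hv0'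
    have hz : ∃ z, (∀ i : Fin n, l i.castSucc z = 0) ∧ l (Fin.last n) z ≠ 0 := by
      by_contra hc
      push_neg at hc
      refine hsnoc.2 (mem_span_of_iInf_ker_le_ker (𝕜 := k) (L := Fin.init l) ?_)
      intro z hz
      simp only [Submodule.mem_iInf, LinearMap.mem_ker] at hz ⊢
      exact hc z (fun i => hz i)
    obtain ⟨z, hz0, hzne⟩ := hz
    refine ⟨v0 + ((b (Fin.last n) - l (Fin.last n) v0) * (l (Fin.last n) z)⁻¹) • z, ?_⟩
    intro i
    refine Fin.lastCases ?_ ?_ i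
    · rw [map_add, map_smul, smul_eq_mul]
      field_simp
      ring
    · intro j
      rw [map_add, map_smul, smul_eq_mul, hv0 j, hz0 j]
      ring

section Invertible2

variable [Invertible (2 : k)]

omit [Invertible (2 : k)] in
lemma span_apply_zero {n : ℕ} {L : Fin n → V →ₗ[k] k} {f : V →ₗ[k] k}
    (hf : f ∈ Submodule.span k (Set.range L)) {z : V} (hz : ∀ i, L i z = 0) : f z = 0 := by
  rw [Submodule.mem_span_range_iff_exists_fun] at hf
  obtain ⟨c, hc⟩ := hf
  rw [← hc]
  simp [hz]

variable [IsAlgClosed k]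

/-- Lemma E : the key extension step. -/
lemma key_extension {q : QuadraticForm k V} (hq : q ∉ FinStrength k V)
    {n : ℕ} (u : Fin n → V) (hu : LinearIndependent k fun i => Bl q (u i))
    (b : Fin n → k) (a : k) :
    ∃ v, (∀ i, Bl q (u i) v = b i) ∧ q v = a ∧
      Bl q v ∉ Submodule.span k (Set.range fun i => Bl q (u i)) := by
  set L : Fin n → V →ₗ[k] k := fun i => Bl q (u i) with hL
  obtain ⟨v0, hv0⟩ := exists_dual_targets hu b
  obtain ⟨z, hz0, hzq⟩ := exists_qne hq (Fin.snoc L (Bl q v0))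
  have hzL : ∀ i, L i z = 0 := fun i => by
    have := hz0 i.castSucc; rwa [Fin.snoc_castSucc] at this
  have hzv0 : Bl q v0 z = 0 := by
    have := hz0 (Fin.last n); rwa [Fin.snoc_last] at this
  obtain ⟨t, ht⟩ := IsAlgClosed.exists_pow_nat_eq (k := k) ((a - q v0) / q z) zero_lt_two
  set v1 := v0 + t • z with hv1_def
  have hv1L : ∀ i, L i v1 = b i := by
    intro i
    rw [hv1_def, map_add, map_smul, smul_eq_mul, hv0 i, hzL i, mul_zero, add_zero]
  have hv1q : q v1 = a := by
    rw [hv1_def, q_apply_smul_add, hzv0, ht]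
    field_simp
    ring
  by_cases hmem : Bl q v1 ∈ Submodule.span k (Set.range L)
  · obtain ⟨z1, hz1L, hz1q⟩ := exists_qne hq L
    obtain ⟨z2, hz2, hz2q⟩ := exists_qne hq (Fin.snoc L (Bl q z1))
    have hz2L : ∀ i, L i z2 = 0 := fun i => by
      have := hz2 i.castSucc; rwa [Fin.snoc_castSucc] at this
    have hz12 : Bl q z1 z2 = 0 := by
      have := hz2 (Fin.last n); rwa [Fin.snoc_last] at this
    obtain ⟨s, hs⟩ := IsAlgClosed.exists_pow_nat_eq (k := k) (-(q z1) / q z2) zero_lt_two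
    set w := z1 + s • z2 with hw_def
    have hwL : ∀ i, L i w = 0 := by
      intro i
      rw [hw_def, map_add, map_smul, smul_eq_mul, hz1L i, hz2L i, mul_zero, add_zero]
    have hwq : q w = 0 := by
      rw [hw_def, q_apply_smul_add, hz12, hs]
      field_simp
      ring
    have hwz1 : Bl q w z1 = q z1 := by
      rw [hw_def, map_add, LinearMap.add_apply, map_smul, LinearMap.smul_apply, Bl_self,
        smul_eq_mul, Bl_symm q z2 z1, hz12, mul_zero, add_zero]
    refine ⟨v1 + w, ?_, ?_, ?_⟩
    · intro i
      rw [map_add, hv1L i, hwL i, add_zero]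
    · rw [q_apply_add, hwq, span_apply_zero hmem hwL, hv1q]
      ring
    · intro hsp
      rw [map_add] at hsp
      have hw_mem : Bl q w ∈ Submodule.span k (Set.range L) := by
        have := Submodule.sub_mem _ hsp hmem
        rwa [add_sub_cancel_left] at this
      have := span_apply_zero hw_mem hz1L
      rw [hwz1] at this
      exact hz1q this
  · exact ⟨v1, hv1L, hv1q, hmem⟩

/-- Existence of a sequence of vectors realizing a prescribed symmetric "Gram matrix". -/
lemma exists_gram_seq {q : QuadraticForm k V} (hq : q ∉ FinStrength k V)
    (c : ℕ → ℕ → k) (hc : ∀ i j, c i j = c j i) :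
    ∃ v : ℕ → V, ∀ i j, Bl q (v i) (v j) = c i j := by
  classical
  have hE : ∀ (n : ℕ) (v : Fin n → V), LinearIndependent k (fun i => Bl q (v i)) →
      ∃ vn, (∀ i : Fin n, Bl q (v i) vn = c i n) ∧ q vn = c n n ∧
        Bl q vn ∉ Submodule.span k (Set.range fun i => Bl q (v i)) :=
    fun n v hv => key_extension hq v hv (fun i => c i n) (c n n)
  choose f hf1 hf2 hf3 using hE
  let Good : ∀ n : ℕ, (Fin n → V) → Prop := fun n v =>
    (∀ i j : Fin n, Bl q (v i) (v j) = c i j) ∧ LinearIndependent k (fun i => Bl q (v i))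
  have base : Good 0 (fun i => i.elim0) :=
    ⟨fun i => i.elim0, linearIndependent_empty_type⟩
  have step : ∀ (n : ℕ) (v : Fin n → V) (h : Good n v),
      Good (n + 1) (Fin.snoc v (f n v h.2)) := by
    intro n v h
    set vn := f n v h.2 with hvn
    constructor
    · intro i j
      refine Fin.lastCases ?_ ?_ i
      · refine Fin.lastCases ?_ ?_ j
        · rw [Fin.snoc_last, Bl_self, hf2 n v h.2, Fin.val_last]
        · intro j'
          rw [Fin.snoc_last, Fin.snoc_castSucc, Bl_symm, hf1 n v h.2 j', Fin.val_last,
            Fin.coe_castSucc, hc]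
      · intro i'
        refine Fin.lastCases ?_ ?_ j
        · rw [Fin.snoc_castSucc, Fin.snoc_last, hf1 n v h.2 i', Fin.val_last, Fin.coe_castSucc]
        · intro j'
          rw [Fin.snoc_castSucc, Fin.snoc_castSucc, Fin.coe_castSucc, Fin.coe_castSucc]
          exact h.1 i' j'
    · have heq := Fin.comp_snoc (⇑(Bl q)) v vn
      show LinearIndependent k (⇑(Bl q) ∘ Fin.snoc v vn)
      rw [heq]
      exact linearIndependent_fin_snoc.mpr ⟨h.2, hf3 n v h.2⟩
  let G : ∀ n : ℕ, {v : Fin n → V // Good n v} := fun n =>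
    Nat.rec ⟨fun i => i.elim0, base⟩ (fun m ih => ⟨Fin.snoc ih.1 (f m ih.1 ih.2.2), step m ih.1 ih.2⟩) n
  have hGsucc : ∀ n : ℕ, (G (n + 1)).1 = Fin.snoc (G n).1 (f n (G n).1 (G n).2.2) :=
    fun n => rfl
  have hstab : ∀ (m n : ℕ) (h : n ≤ m) (i : Fin n), (G m).1 (Fin.castLE h i) = (G n).1 i := by
    intro m
    induction m with
    | zero =>
      intro n h i
      obtain rfl : n = 0 := Nat.le_zero.mp h
      exact i.elim0
    | succ m ihm =>
      intro n h i
      rcases eq_or_lt_of_le h with rfl | hlt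
      · rfl
      · have hn : n ≤ m := Nat.lt_succ_iff.mp hlt
        rw [hGsucc m]
        have hcast : Fin.castLE h i = Fin.castSucc (Fin.castLE hn i) := rfl
        rw [hcast, Fin.snoc_castSucc, ihm n hn i]
  refine ⟨fun n => (G (n + 1)).1 (Fin.last n), ?_⟩
  intro i j
  set m := max i j + 1 with hm
  have him : i + 1 ≤ m := by omega
  have hjm : j + 1 ≤ m := by omega
  have hi : (G m).1 (Fin.castLE him (Fin.last i)) = (G (i + 1)).1 (Fin.last i) :=
    hstab m (i + 1) him (Fin.last i)
  have hj : (G m).1 (Fin.castLE hjm (Fin.last j)) = (G (j + 1)).1 (Fin.last j) :=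
    hstab m (j + 1) hjm (Fin.last j)
  show Bl q ((G (i + 1)).1 (Fin.last i)) ((G (j + 1)).1 (Fin.last j)) = c i j
  rw [← hi, ← hj]
  have := (G m).2.1 (Fin.castLE him (Fin.last i)) (Fin.castLE hjm (Fin.last j))
  simpa using this

end Invertible2

end QuadEmbedAux

/-- Every quadratic space of countable dimension embeds into any
non-degenerate quadratic space over an algebraically closed field of characteristic
`≠ 2`. -/
theorem quadratic_embedding_of_nondegenerate
    {k V W : Type*} [Field k] [IsAlgClosed k] (hk2 : (2 : k) ≠ 0)
    [AddCommGroup V] [Module k V] [AddCommGroup W] [Module k W]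
    (q : QuadraticForm k V) (hq : q ∉ FinStrength k V)
    (p : QuadraticForm k W) (hW : Module.rank k W ≤ Cardinal.aleph0) :
    ∃ φ : W →ₗ[k] V, ∀ w, q (φ w) = p w := by
  classical
  haveI : Invertible (2 : k) := invertibleOfNonzero hk2
  open QuadEmbedAux in
  let bW := Module.Basis.ofVectorSpace k W
  have hcount : Countable (Module.Basis.ofVectorSpaceIndex k W) := by
    rw [← Cardinal.mk_le_aleph0_iff, bW.mk_eq_rank'']
    exact hW
  obtain ⟨inj, hinj⟩ := countable_iff_exists_injective _ |>.mp hcount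
  set w : ℕ → W := fun n => if h : ∃ i, inj i = n then bW h.choose else 0 with hw
  have hwinj : ∀ i, w (inj i) = bW i := by
    intro i
    have h : ∃ j, inj j = inj i := ⟨i, rfl⟩
    rw [hw]
    simp only
    rw [dif_pos h]
    congr 1
    exact hinj h.choose_spec
  obtain ⟨v, hv⟩ := QuadEmbedAux.exists_gram_seq hq
    (fun i j => QuadEmbedAux.Bl p (w i) (w j))
    (fun i j => QuadEmbedAux.Bl_symm p (w i) (w j))
  set φ := (bW.constr k) (fun i => v (inj i)) with hφ
  refine ⟨φ, ?_⟩
  have hbil : (QuadEmbedAux.Bl q).compl₁₂ φ φ = QuadEmbedAux.Bl p := by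
    apply LinearMap.ext_basis bW bW
    intro i j
    rw [LinearMap.compl₁₂_apply, hφ, Module.Basis.constr_basis, Module.Basis.constr_basis,
      hv (inj i) (inj j), hwinj, hwinj]
  intro x
  calc q (φ x) = QuadEmbedAux.Bl q (φ x) (φ x) := (QuadEmbedAux.Bl_self q _).symm
    _ = ((QuadEmbedAux.Bl q).compl₁₂ φ φ) x x := rfl
    _ = QuadEmbedAux.Bl p x x := by rw [hbil]
    _ = p x := QuadEmbedAux.Bl_self p x
end

section
/- Let (V,q) and (W,p) be non-degenerate quadratic spaces over k, each of dimension ≤ ℵ₀ as k-vector spaces. Then there exist k-linear maps φ : W → V and ψ : V → W with q(φ(w)) = p(w) for all w ∈ W and p(ψ(v)) = q(v) for all v ∈ V; that is, any two non-degenerate quadratic spaces of countable dimension over k are isogenous. -/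
set_option linter.unusedSectionVars false
set_option maxHeartbeats 1000000

open scoped BigOperators

open scoped BigOperators

section Aux

variable {k V : Type*} [Field k] [AddCommGroup V] [Module k V]

theorem finStrength_of_forms :
    ∀ (n : ℕ) (l : Fin n → V →ₗ[k] k) (q : QuadraticForm k V),
      (∀ x, (∀ i, l i x = 0) → q x = 0) → q ∈ FinStrength k V := by
  intro n
  induction n with
  | zero =>
    intro l q h
    have : q = 0 := QuadraticMap.ext fun x => h x (fun i => i.elim0)
    rw [this]; exact zero_mem _
  | succ n ih =>
    intro l q h
    by_cases hw : ∃ w, l (Fin.last n) w ≠ 0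
    · obtain ⟨w0, hw0⟩ := hw
      set w : V := (l (Fin.last n) w0)⁻¹ • w0 with hwdef
      have hlw : l (Fin.last n) w = 1 := by
        rw [hwdef, map_smul, smul_eq_mul, inv_mul_cancel₀ hw0]
      set T : V →ₗ[k] V := LinearMap.id - (l (Fin.last n)).smulRight w with hT
      have hTx : ∀ x, T x = x - l (Fin.last n) x • w := fun x => rfl
      have hlT : ∀ x, l (Fin.last n) (T x) = 0 := by
        intro x
        rw [hTx, map_sub, map_smul, smul_eq_mul, hlw, mul_one, sub_self]
      have h1 : q.comp T ∈ FinStrength k V := by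
        apply ih (fun i => (l i.castSucc).comp T)
        intro x hx
        rw [QuadraticMap.comp_apply]
        apply h
        intro i
        rcases Fin.eq_castSucc_or_eq_last i with ⟨j, rfl⟩ | rfl
        · exact hx j
        · exact hlT x
      have key : ∀ x, (q - q.comp T) x =
          l (Fin.last n) x * ((q.polarBilin w).comp T x) +
          l (Fin.last n) x * ((q w • l (Fin.last n)) x) := by
        intro x
        have hx : x = T x + l (Fin.last n) x • w := by
          rw [hTx]; abel
        have : q x = q (T x + l (Fin.last n) x • w) := by rw [← hx]
        rw [QuadraticMap.sub_apply, QuadraticMap.comp_apply, this]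
        have hpolar : q (T x + l (Fin.last n) x • w)
            = q (T x) + q (l (Fin.last n) x • w) + QuadraticMap.polar q (T x) (l (Fin.last n) x • w) := by
          rw [QuadraticMap.polar]; ring
        rw [hpolar, QuadraticMap.map_smul, QuadraticMap.polar_smul_right,
          QuadraticMap.polar_comm]
        simp only [LinearMap.comp_apply, QuadraticMap.polarBilin_apply_apply,
          LinearMap.smul_apply, smul_eq_mul]
        ring
      have h2 : q - q.comp T ∈ FinStrength k V :=
        ⟨2, ![l (Fin.last n), l (Fin.last n)],
          ![(q.polarBilin w).comp T, q w • l (Fin.last n)], fun x => by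
            rw [key x]; simp [Fin.sum_univ_two]⟩
      have := add_mem h1 h2
      simpa using this
    · push_neg at hw
      apply ih (fun i => l i.castSucc)
      intro x hx
      apply h
      intro i
      rcases Fin.eq_castSucc_or_eq_last i with ⟨j, rfl⟩ | rfl
      · exact hx j
      · exact hw x

end Aux

section Orth

variable {k V : Type*} [Field k] [IsAlgClosed k] [AddCommGroup V] [Module k V]

theorem exists_orth (q : QuadraticForm k V) (hq : q ∉ FinStrength k V) (L : List V) :
    ∃ x, q x = 1 ∧ ∀ y ∈ L, QuadraticMap.polar q y x = 0 := by
  have h1 : ∃ x, q x ≠ 0 ∧ ∀ y ∈ L, QuadraticMap.polar q y x = 0 := by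
    by_contra hcon
    push_neg at hcon
    apply hq
    apply finStrength_of_forms L.length (fun i => q.polarBilin (L.get i))
    intro x hx
    by_contra hqx
    obtain ⟨y, hyL, hy⟩ := hcon x hqx
    obtain ⟨i, rfl⟩ := List.mem_iff_get.mp hyL
    exact hy (hx i)
  obtain ⟨x, hx0, hxL⟩ := h1
  obtain ⟨c, hc⟩ := IsAlgClosed.exists_pow_nat_eq (q x)⁻¹ (n := 2) (by norm_num)
  refine ⟨c • x, ?_, ?_⟩
  · rw [QuadraticMap.map_smul, smul_eq_mul, ← pow_two, hc, inv_mul_cancel₀ hx0]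
  · intro y hy
    rw [QuadraticMap.polar_smul_right, hxL y hy, smul_zero]

variable (q : QuadraticForm k V) (hq : q ∉ FinStrength k V)

noncomputable def nextVec (L : List V) : V := (exists_orth q hq L).choose

theorem nextVec_spec (L : List V) :
    q (nextVec q hq L) = 1 ∧ ∀ y ∈ L, QuadraticMap.polar q y (nextVec q hq L) = 0 :=
  (exists_orth q hq L).choose_spec

noncomputable def seqList : ℕ → List V
  | 0 => []
  | n + 1 => nextVec q hq (seqList n) :: seqList n

noncomputable def orthSeq (n : ℕ) : V := nextVec q hq (seqList q hq n)

theorem orthSeq_mem {i j : ℕ} (h : i < j) : orthSeq q hq i ∈ seqList q hq j := by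
  induction j with
  | zero => omega
  | succ n ihn =>
    rw [seqList]
    rcases Nat.lt_succ_iff_lt_or_eq.mp h with h' | rfl
    · exact List.mem_cons_of_mem _ (ihn h')
    · exact List.mem_cons_self

theorem orthSeq_norm (n : ℕ) : q (orthSeq q hq n) = 1 := (nextVec_spec q hq _).1

theorem orthSeq_polar {i j : ℕ} (h : i ≠ j) :
    QuadraticMap.polar q (orthSeq q hq i) (orthSeq q hq j) = 0 := by
  rcases h.lt_or_gt with h' | h'
  · exact (nextVec_spec q hq _).2 _ (orthSeq_mem q hq h')
  · rw [QuadraticMap.polar_comm]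
    exact (nextVec_spec q hq _).2 _ (orthSeq_mem q hq h')

end Orth

section Hyper

variable {k V : Type*} [Field k] [AddCommGroup V] [Module k V]

theorem qadd (q : QuadraticForm k V) (x y : V) :
    q (x + y) = q x + q y + QuadraticMap.polar q x y := by
  rw [QuadraticMap.polar]; ring

/-- hyperbolic pair vectors built from an orthonormal sequence -/
def uu (v : ℕ → V) (c : k) (n : ℕ) : V := (1:k) • v (2*n) + c • v (2*n+1)

def ww (v : ℕ → V) (c d : k) (n : ℕ) : V := d • v (2*n) + (-(c*d)) • v (2*n+1)

variable (q : QuadraticForm k V) (v : ℕ → V) (c d : k)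

theorem polar_v (hv1 : ∀ n, q (v n) = 1)
    (hv2 : ∀ i j, i ≠ j → QuadraticMap.polar q (v i) (v j) = 0) (a b : ℕ) :
    QuadraticMap.polar q (v a) (v b) = if a = b then 2 else 0 := by
  by_cases h : a = b
  · subst h
    rw [if_pos rfl, QuadraticMap.polar_self, hv1]
    norm_num
  · rw [if_neg h]; exact hv2 a b h

theorem expandPolar (hv1 : ∀ n, q (v n) = 1)
    (hv2 : ∀ i j, i ≠ j → QuadraticMap.polar q (v i) (v j) = 0)
    (a a' b b' : k) (s s' t t' : ℕ) :
    QuadraticMap.polar q (a • v s + a' • v s') (b • v t + b' • v t') =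
      a * b * (if s = t then 2 else 0) + a * b' * (if s = t' then 2 else 0) +
      a' * b * (if s' = t then 2 else 0) + a' * b' * (if s' = t' then 2 else 0) := by
  simp only [QuadraticMap.polar_add_left, QuadraticMap.polar_add_right,
    QuadraticMap.polar_smul_left, QuadraticMap.polar_smul_right, smul_eq_mul,
    polar_v q v hv1 hv2]
  ring

theorem expandQ (hv1 : ∀ n, q (v n) = 1)
    (hv2 : ∀ i j, i ≠ j → QuadraticMap.polar q (v i) (v j) = 0)
    (a a' : k) (s s' : ℕ) (h : s ≠ s') :
    q (a • v s + a' • v s') = a * a + a' * a' := by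
  rw [qadd, QuadraticMap.map_smul, QuadraticMap.map_smul, QuadraticMap.polar_smul_left,
    QuadraticMap.polar_smul_right, hv1, hv1, hv2 s s' h]
  simp [smul_eq_mul]

theorem polar_sum_right (x : V) (s : Finset ℕ) (f : ℕ → V) :
    QuadraticMap.polar q x (∑ m ∈ s, f m) = ∑ m ∈ s, QuadraticMap.polar q x (f m) := by
  rw [← QuadraticMap.polarBilin_apply_apply, map_sum]
  simp only [QuadraticMap.polarBilin_apply_apply]

theorem polar_sum_left (x : V) (s : Finset ℕ) (f : ℕ → V) :
    QuadraticMap.polar q (∑ m ∈ s, f m) x = ∑ m ∈ s, QuadraticMap.polar q (f m) x := by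
  rw [QuadraticMap.polar_comm, polar_sum_right]
  exact Finset.sum_congr rfl fun m _ => QuadraticMap.polar_comm _ _ _

variable (hv1 : ∀ n, q (v n) = 1)
    (hv2 : ∀ i j, i ≠ j → QuadraticMap.polar q (v i) (v j) = 0)
    (hc : c ^ 2 = -1) (hd : (4:k) * d = 1)

include hv1 hv2 hc hd

theorem q_uu (n : ℕ) : q (uu v c n) = 0 := by
  rw [uu, expandQ q v hv1 hv2 _ _ _ _ (by omega)]
  linear_combination hc

theorem q_ww (n : ℕ) : q (ww v c d n) = 0 := by
  rw [ww, expandQ q v hv1 hv2 _ _ _ _ (by omega)]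
  linear_combination (d*d) * hc

theorem polar_uu (m n : ℕ) : QuadraticMap.polar q (uu v c m) (uu v c n) = 0 := by
  rw [uu, uu, expandPolar q v hv1 hv2]
  by_cases h : m = n
  · subst h
    rw [if_pos rfl, if_pos rfl, if_neg (by omega), if_neg (by omega)]
    linear_combination 2 * hc
  · rw [if_neg (by omega), if_neg (by omega), if_neg (by omega), if_neg (by omega)]
    ring

theorem polar_ww (m n : ℕ) : QuadraticMap.polar q (ww v c d m) (ww v c d n) = 0 := by
  rw [ww, ww, expandPolar q v hv1 hv2]
  by_cases h : m = n
  · subst h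
    rw [if_pos rfl, if_pos rfl, if_neg (by omega), if_neg (by omega)]
    linear_combination (2*d*d) * hc
  · rw [if_neg (by omega), if_neg (by omega), if_neg (by omega), if_neg (by omega)]
    ring

theorem polar_uw (m n : ℕ) :
    QuadraticMap.polar q (uu v c m) (ww v c d n) = if m = n then 1 else 0 := by
  rw [uu, ww, expandPolar q v hv1 hv2]
  by_cases h : m = n
  · subst h
    rw [if_pos rfl, if_pos rfl, if_pos rfl, if_neg (by omega), if_neg (by omega)]
    linear_combination (-2*d) * hc + hd
  · rw [if_neg h, if_neg (by omega), if_neg (by omega), if_neg (by omega), if_neg (by omega)]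
    ring

theorem polar_wu (m n : ℕ) :
    QuadraticMap.polar q (ww v c d m) (uu v c n) = if m = n then 1 else 0 := by
  rw [QuadraticMap.polar_comm, polar_uw q v c d hv1 hv2 hc hd]
  simp [eq_comm]

theorem polar_term (A B A' B' : k) (m n : ℕ) :
    QuadraticMap.polar q (A • uu v c m + B • ww v c d m) (A' • uu v c n + B' • ww v c d n) =
      if m = n then A * B' + B * A' else 0 := by
  simp only [QuadraticMap.polar_add_left, QuadraticMap.polar_add_right,
    QuadraticMap.polar_smul_left, QuadraticMap.polar_smul_right, smul_eq_mul,
    polar_uu q v c d hv1 hv2 hc hd, polar_ww q v c d hv1 hv2 hc hd,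
    polar_uw q v c d hv1 hv2 hc hd, polar_wu q v c d hv1 hv2 hc hd]
  split_ifs with h <;> ring

theorem q_term (A B : k) (n : ℕ) :
    q (A • uu v c n + B • ww v c d n) = A * B := by
  rw [qadd, QuadraticMap.map_smul, QuadraticMap.map_smul,
    q_uu q v c d hv1 hv2 hc hd, q_ww q v c d hv1 hv2 hc hd,
    QuadraticMap.polar_smul_left, QuadraticMap.polar_smul_right,
    polar_uw q v c d hv1 hv2 hc hd, if_pos rfl]
  simp [smul_eq_mul]

theorem q_hvec (A B : ℕ → k) (s : Finset ℕ) :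
    q (∑ m ∈ s, (A m • uu v c m + B m • ww v c d m)) = ∑ m ∈ s, A m * B m := by
  induction s using Finset.induction_on with
  | empty => simp
  | @insert a s ha ih =>
    rw [Finset.sum_insert ha, Finset.sum_insert ha, qadd, ih,
      q_term q v c d hv1 hv2 hc hd, polar_sum_right]
    have : ∑ m ∈ s, QuadraticMap.polar q (A a • uu v c a + B a • ww v c d a)
        (A m • uu v c m + B m • ww v c d m) = 0 := by
      apply Finset.sum_eq_zero
      intro m hm
      rw [polar_term q v c d hv1 hv2 hc hd, if_neg (fun hEq => ha (by rw [hEq]; exact hm))]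
    rw [this]
    ring

theorem polar_hvec (A B A' B' : ℕ → k) (s : Finset ℕ) :
    QuadraticMap.polar q (∑ m ∈ s, (A m • uu v c m + B m • ww v c d m))
      (∑ m ∈ s, (A' m • uu v c m + B' m • ww v c d m)) =
      ∑ m ∈ s, (A m * B' m + B m * A' m) := by
  rw [polar_sum_left]
  apply Finset.sum_congr rfl
  intro m hm
  rw [polar_sum_right]
  have : ∀ n ∈ s, QuadraticMap.polar q (A m • uu v c m + B m • ww v c d m)
      (A' n • uu v c n + B' n • ww v c d n)
      = if m = n then (fun n => A m * B' n + B m * A' n) n else 0 := fun n _ =>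
    polar_term q v c d hv1 hv2 hc hd _ _ _ _ _ _
  rw [Finset.sum_congr rfl this, Finset.sum_ite_eq s m _, if_pos hm]

end Hyper

open scoped Classical in
noncomputable def Acoef {k W ι : Type*} [Field k] [AddCommGroup W] [Module k W]
    (p : QuadraticForm k W) (b : Module.Basis ι k W) (g : ι → ℕ) (j : ι) (m : ℕ) : k :=
  if m = g j then p (b j)
  else if h : (∃ j', g j' = m) ∧ m < g j then QuadraticMap.polar p (b h.1.choose) (b j) else 0

noncomputable def Bcoef {k ι : Type*} [Field k] (g : ι → ℕ) (j : ι) (m : ℕ) : k :=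
  if m = g j then 1 else 0

section Coef
variable {k W ι : Type*} [Field k] [AddCommGroup W] [Module k W]
variable (p : QuadraticForm k W) (b : Module.Basis ι k W) (g : ι → ℕ)

theorem Acoef_self (j : ι) : Acoef p b g j (g j) = p (b j) := by
  rw [Acoef, if_pos rfl]

theorem Acoef_zero_of_lt {j : ι} {m : ℕ} (h : g j < m) : Acoef p b g j m = 0 := by
  rw [Acoef, if_neg (by omega), dif_neg (by rintro ⟨-, h2⟩; omega)]

theorem Acoef_cross (hg : Function.Injective g) {i j : ι} (hij : g i < g j) :
    Acoef p b g j (g i) = QuadraticMap.polar p (b i) (b j) := by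
  have hex : (∃ j', g j' = g i) ∧ g i < g j := ⟨⟨i, rfl⟩, hij⟩
  rw [Acoef, if_neg (by omega), dif_pos hex]
  congr 1
  exact congrArg b (hg hex.1.choose_spec)

theorem Acoef_zero_of_gt {i j : ι} (hij : g j < g i) (hne : g i ≠ g j) :
    Acoef p b g j (g i) = 0 := by
  rw [Acoef, if_neg hne, dif_neg (by rintro ⟨-, h2⟩; omega)]

theorem Bcoef_self (j : ι) : Bcoef g j (g j) = (1 : k) := by rw [Bcoef, if_pos rfl]

theorem Bcoef_zero {j : ι} {m : ℕ} (h : m ≠ g j) : Bcoef g j m = (0 : k) := by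
  rw [Bcoef, if_neg h]

end Coef

theorem exists_embedding {k V W : Type*} [Field k] [IsAlgClosed k] (hk2 : (2:k) ≠ 0)
    [AddCommGroup V] [Module k V] [AddCommGroup W] [Module k W]
    (q : QuadraticForm k V) (hq : q ∉ FinStrength k V)
    (p : QuadraticForm k W) (hWdim : Module.rank k W ≤ Cardinal.aleph0) :
    ∃ φ : W →ₗ[k] V, ∀ x, q (φ x) = p x := by
  classical
  set v : ℕ → V := orthSeq q hq with hvdef
  have hv1 : ∀ n, q (v n) = 1 := orthSeq_norm q hq
  have hv2 : ∀ i j, i ≠ j → QuadraticMap.polar q (v i) (v j) = 0 :=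
    fun i j h => orthSeq_polar q hq h
  obtain ⟨c, hc⟩ := IsAlgClosed.exists_pow_nat_eq (-1 : k) (n := 2) (by norm_num)
  have h4 : (4:k) ≠ 0 := by
    have h : (4:k) = 2*2 := by norm_num
    rw [h]; exact mul_ne_zero hk2 hk2
  set d : k := (4:k)⁻¹ with hddef
  have hd : (4:k) * d = 1 := mul_inv_cancel₀ h4
  set b : Module.Basis (Module.Free.ChooseBasisIndex k W) k W := Module.Free.chooseBasis k W with hbdef
  set ι := Module.Free.ChooseBasisIndex k W
  have hcount : Countable ι := by
    apply Cardinal.mk_le_aleph0_iff.mp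
    rw [← Module.Free.rank_eq_card_chooseBasisIndex]
    exact hWdim
  obtain ⟨g, hg⟩ := Countable.exists_injective_nat ι
  set fv : ι → V := fun j => ∑ m ∈ Finset.range (g j + 1),
    (Acoef p b g j m • uu v c m + Bcoef (k := k) g j m • ww v c d m) with hfv
  have hext : ∀ (j : ι) (K : ℕ), g j < K → fv j = ∑ m ∈ Finset.range K,
      (Acoef p b g j m • uu v c m + Bcoef (k := k) g j m • ww v c d m) := by
    intro j K hK
    apply Finset.sum_subset
    · exact Finset.range_subset_range.mpr (by omega)
    · intro m hm hms
      have h1 : g j < m := by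
        simp only [Finset.mem_range] at hms; omega
      rw [Acoef_zero_of_lt p b g h1, Bcoef_zero g (by omega), zero_smul, zero_smul, add_zero]
  have hfq : ∀ j, q (fv j) = p (b j) := by
    intro j
    rw [hfv]
    rw [q_hvec q v c d hv1 hv2 hc hd]
    have h1 : ∀ m ∈ Finset.range (g j + 1), Acoef p b g j m * Bcoef g j m
        = if g j = m then Acoef p b g j m else 0 := by
      intro m _
      by_cases h : m = g j
      · subst h; rw [Bcoef_self, if_pos rfl, mul_one]
      · rw [Bcoef_zero g h, if_neg (fun hh => h hh.symm), mul_zero]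
    rw [Finset.sum_congr rfl h1, Finset.sum_ite_eq,
      if_pos (Finset.mem_range.mpr (by omega)), Acoef_self]
  have hfpolar : ∀ i j, i ≠ j →
      QuadraticMap.polar q (fv i) (fv j) = QuadraticMap.polar p (b i) (b j) := by
    intro i j hij
    set K := max (g i) (g j) + 1 with hK
    rw [hext i K (by omega), hext j K (by omega), polar_hvec q v c d hv1 hv2 hc hd,
      Finset.sum_add_distrib]
    have e1 : ∑ m ∈ Finset.range K, Acoef p b g i m * Bcoef g j m = Acoef p b g i (g j) := by
      have h1 : ∀ m ∈ Finset.range K, Acoef p b g i m * Bcoef g j m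
          = if g j = m then Acoef p b g i m else 0 := by
        intro m _
        by_cases h : m = g j
        · subst h; rw [Bcoef_self, if_pos rfl, mul_one]
        · rw [Bcoef_zero g h, if_neg (fun hh => h hh.symm), mul_zero]
      rw [Finset.sum_congr rfl h1, Finset.sum_ite_eq,
        if_pos (Finset.mem_range.mpr (by omega))]
    have e2 : ∑ m ∈ Finset.range K, Bcoef g i m * Acoef p b g j m = Acoef p b g j (g i) := by
      have h1 : ∀ m ∈ Finset.range K, Bcoef g i m * Acoef p b g j m
          = if g i = m then Acoef p b g j m else 0 := by
        intro m _
        by_cases h : m = g i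
        · subst h; rw [Bcoef_self, if_pos rfl, one_mul]
        · rw [Bcoef_zero g h, if_neg (fun hh => h hh.symm), zero_mul]
      rw [Finset.sum_congr rfl h1, Finset.sum_ite_eq,
        if_pos (Finset.mem_range.mpr (by omega))]
    rw [e1, e2]
    have hgij : g i ≠ g j := fun h => hij (hg h)
    rcases lt_or_gt_of_ne hgij with h | h
    · rw [Acoef_zero_of_gt p b g h hgij.symm, Acoef_cross p b g hg h, zero_add]
    · rw [Acoef_cross p b g hg h, Acoef_zero_of_gt p b g h hgij, add_zero,
        QuadraticMap.polar_comm]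
  refine ⟨b.constr k fv, ?_⟩
  have hconstr : ∀ j, (b.constr k fv) (b j) = fv j := fun j => b.constr_basis k fv j
  set φ : W →ₗ[k] V := b.constr k fv with hφ
  set D : QuadraticForm k W := q.comp φ - p with hD
  have hDapp : ∀ x, D x = q (φ x) - p x := by
    intro x; rw [hD]; simp [QuadraticMap.comp_apply]
  have hDb : ∀ j, D (b j) = 0 := by
    intro j; rw [hDapp, hconstr, hfq, sub_self]
  have hpD : ∀ x y : W, QuadraticMap.polar D x y
      = QuadraticMap.polar q (φ x) (φ y) - QuadraticMap.polar p x y := by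
    intro x y
    rw [QuadraticMap.polar, QuadraticMap.polar, QuadraticMap.polar, hDapp, hDapp, hDapp,
      map_add]
    ring
  have hDpolar : ∀ i j, QuadraticMap.polar D (b i) (b j) = 0 := by
    intro i j
    rw [hpD, hconstr, hconstr]
    by_cases h : i = j
    · subst h
      rw [QuadraticMap.polar_self, QuadraticMap.polar_self, hfq]
      abel
    · rw [hfpolar i j h, sub_self]
  have main : ∀ (s : Finset ι) (cf : ι → k), D (∑ i ∈ s, cf i • b i) = 0 ∧
      ∀ t, QuadraticMap.polar D (∑ i ∈ s, cf i • b i) (b t) = 0 := by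
    intro s cf
    induction s using Finset.induction_on with
    | empty =>
      constructor
      · simp
      · intro t
        simp [QuadraticMap.polar]
    | @insert a s ha ih =>
      have hsum : ∀ y : W, D (cf a • b a + y) = D (cf a • b a) + D y
          + QuadraticMap.polar D (cf a • b a) y := fun y => by
        rw [QuadraticMap.polar]; ring
      constructor
      · rw [Finset.sum_insert ha, hsum, QuadraticMap.map_smul, hDb, ih.1,
          QuadraticMap.polar_smul_left, QuadraticMap.polar_comm, ih.2 a]
        simp
      · intro t
        rw [Finset.sum_insert ha, QuadraticMap.polar_add_left,
          QuadraticMap.polar_smul_left, hDpolar, ih.2 t]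
        simp
  intro x
  have hx := b.linearCombination_repr x
  rw [Finsupp.linearCombination_apply, Finsupp.sum] at hx
  have hfin := (main (b.repr x).support (fun i => b.repr x i)).1
  rw [hx, hDapp] at hfin
  exact sub_eq_zero.mp hfin

/-- Any two non-degenerate quadratic spaces of countable dimension over
an algebraically closed field of characteristic `≠ 2` are isogenous. -/
theorem quadratic_isogenous
    {k V W : Type*} [Field k] [IsAlgClosed k] (hk2 : (2 : k) ≠ 0)
    [AddCommGroup V] [Module k V] [AddCommGroup W] [Module k W]
    (q : QuadraticForm k V) (hq : q ∉ FinStrength k V)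
    (hVdim : Module.rank k V ≤ Cardinal.aleph0)
    (p : QuadraticForm k W) (hp : p ∉ FinStrength k W)
    (hWdim : Module.rank k W ≤ Cardinal.aleph0) :
    (∃ φ : W →ₗ[k] V, ∀ w, q (φ w) = p w) ∧ ∃ ψ : V →ₗ[k] W, ∀ v, p (ψ v) = q v :=
  ⟨exists_embedding hk2 q hq p hWdim, exists_embedding hk2 p hp q hVdim⟩
end

section
/- Let (V,T) be a cubic space over k and suppose there exist linear forms ℓ_1,…,ℓ_s and quadratic forms q_1,…,q_s on V such that T(x,x,x) = Σ_{i=1}^s ℓ_i(x)·q_i(x) for all x ∈ V. Then rrk(V,T) ≤ s. In particular, the residual rank of a cubic space is at most its strength. -/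
open scoped BigOperators

/-- For a trilinear form `T` and a vector `v`, the quadratic form `f_v : x ↦ 3 * T v x x`. -/
noncomputable def fQuad {k V : Type*} [Field k] [AddCommGroup V] [Module k V]
    (T : V →ₗ[k] V →ₗ[k] V →ₗ[k] k) (v : V) : QuadraticForm k V :=
  LinearMap.BilinMap.toQuadraticMap ((3 : k) • T v)

/-- The residual rank of a trilinear form `T`: the dimension of the image of the linear
map `v ↦ class of f_v` in the quotient of the space of quadratic forms by the subspace
of finite-strength quadratic forms. -/
noncomputable def rrk (k : Type*) {V : Type*} [Field k] [AddCommGroup V] [Module k V]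
    (T : V →ₗ[k] V →ₗ[k] V →ₗ[k] k) : Cardinal :=
  Module.rank k ↥(Submodule.span k
    (Set.range fun v => Submodule.Quotient.mk (p := FinStrength k V) (fQuad T v)))

/-- A cubic space `(V,T)` has finite strength if its cubic form `x ↦ T x x x` is a
finite sum of products of a linear form with a quadratic form. -/
def FiniteStrengthCubic (k : Type*) {V : Type*} [Field k] [AddCommGroup V] [Module k V]
    (T : V →ₗ[k] V →ₗ[k] V →ₗ[k] k) : Prop :=
  ∃ (n : ℕ) (l : Fin n → V →ₗ[k] k) (q : Fin n → QuadraticForm k V),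
    ∀ x, T x x x = ∑ i, l i x * q i x

set_option maxHeartbeats 1000000 in
/-- Proposition 3.4(b) of the paper. If the cubic form of `(V,T)` can
be written as `∑ i, ℓ_i * q_i` with `s` terms, then `rrk(V,T) ≤ s`; i.e. the residual
rank of a cubic space is at most its strength. -/
theorem rrk_le_of_strength_decomposition
    {k V : Type*} [Field k] [IsAlgClosed k]
    (hk2 : (2 : k) ≠ 0) (hk3 : (3 : k) ≠ 0)
    [AddCommGroup V] [Module k V]
    (T : V →ₗ[k] V →ₗ[k] V →ₗ[k] k)
    (hT1 : ∀ x y z, T x y z = T y x z) (hT2 : ∀ x y z, T x y z = T x z y)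
    (s : ℕ) (l : Fin s → V →ₗ[k] k) (q : Fin s → QuadraticForm k V)
    (hdec : ∀ x, T x x x = ∑ i, l i x * q i x) :
    rrk k T ≤ (s : Cardinal) := by
  classical
  -- Key pointwise identity: 3 T(v,x,x) - Σ ℓ_i(v) q_i(x) = Σ ℓ_i(x) polar(q_i)(x,v)
  have key : ∀ v x : V, 3 * T v x x - ∑ i, l i v * q i x
      = ∑ i, l i x * QuadraticMap.polar (q i) x v := by
    intro v x
    have key2 : 2 * (3 * T v x x) =
        ∑ i, 2 * (l i v * q i x + l i x * QuadraticMap.polar (q i) x v) := by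
      have h6 : 6 * T v x x
          = T (x+v) (x+v) (x+v) - T (x-v) (x-v) (x-v) - 2 * T v v v := by
        simp only [map_add, map_sub, LinearMap.add_apply, LinearMap.sub_apply]
        linear_combination -2 * hT2 x x v - 4 * hT1 x v x
      have e1 : T (x+v) (x+v) (x+v)
          = ∑ i, (l i x + l i v) * (q i x + q i v + QuadraticMap.polar (q i) x v) := by
        rw [hdec]
        refine Finset.sum_congr rfl fun i _ => ?_
        rw [map_add]
        congr 1
        simp [QuadraticMap.polar]
      have e2 : T (x-v) (x-v) (x-v)
          = ∑ i, (l i x - l i v) * (q i x + q i v - QuadraticMap.polar (q i) x v) := by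
        rw [hdec]
        refine Finset.sum_congr rfl fun i _ => ?_
        rw [map_sub]
        congr 1
        have hxv : q i (x + -v) = q i x + q i (-v) + QuadraticMap.polar (q i) x (-v) := by
          simp [QuadraticMap.polar]
        rw [sub_eq_add_neg, hxv, QuadraticMap.map_neg, QuadraticMap.polar_neg_right]
        ring
      have e3 := hdec v
      rw [show 2 * (3 * T v x x) = 6 * T v x x by ring, h6, e1, e2, e3,
        Finset.mul_sum, ← Finset.sum_sub_distrib, ← Finset.sum_sub_distrib]
      exact Finset.sum_congr rfl fun i _ => by ring
    have h2 : 2 * (3 * T v x x - ∑ i, l i v * q i x)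
        = 2 * ∑ i, l i x * QuadraticMap.polar (q i) x v := by
      rw [mul_sub, key2, Finset.mul_sum, Finset.mul_sum, ← Finset.sum_sub_distrib]
      exact Finset.sum_congr rfl fun i _ => by ring
    exact mul_left_cancel₀ hk2 h2
  -- membership of the difference in FinStrength
  have hmem : ∀ v : V, fQuad T v - ∑ i, l i v • q i ∈ FinStrength k V := by
    intro v
    refine ⟨s, l, fun i => ((q i).polarBilin.flip) v, fun x => ?_⟩
    have happ : (fQuad T v - ∑ i, l i v • q i) x = 3 * T v x x - ∑ i, l i v * q i x := by
      rw [QuadraticMap.sub_apply, QuadraticMap.sum_apply]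
      simp [fQuad, LinearMap.BilinMap.toQuadraticMap_apply, QuadraticMap.smul_apply,
        smul_eq_mul]
    rw [happ, key]
    refine Finset.sum_congr rfl fun i _ => ?_
    simp [LinearMap.flip_apply, QuadraticMap.polarBilin_apply_apply]
  -- the class of f_v is a combination of the classes of the q_i
  have hq : ∀ v : V, Submodule.Quotient.mk (p := FinStrength k V) (fQuad T v)
      = ∑ i, l i v • Submodule.Quotient.mk (p := FinStrength k V) (q i) := by
    intro v
    have h1 : Submodule.Quotient.mk (p := FinStrength k V) (fQuad T v)
        = Submodule.Quotient.mk (p := FinStrength k V) (∑ i, l i v • q i) :=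
      (Submodule.Quotient.eq _).mpr (hmem v)
    rw [h1]
    simp only [← Submodule.mkQ_apply, map_sum, map_smul]
  set g : Fin s → QuadraticForm k V ⧸ FinStrength k V :=
    fun i => Submodule.Quotient.mk (p := FinStrength k V) (q i) with hg
  have hle : Submodule.span k
      (Set.range fun v => Submodule.Quotient.mk (p := FinStrength k V) (fQuad T v))
      ≤ Submodule.span k (Set.range g) := by
    rw [Submodule.span_le]
    rintro _ ⟨v, rfl⟩
    show Submodule.Quotient.mk (p := FinStrength k V) (fQuad T v) ∈ _
    rw [hq v]
    exact Submodule.sum_mem _ fun i _ =>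
      Submodule.smul_mem _ _ (Submodule.subset_span ⟨i, rfl⟩)
  calc rrk k T ≤ Module.rank k ↥(Submodule.span k (Set.range g)) :=
        Submodule.rank_mono hle
    _ ≤ Cardinal.mk (Set.range g) := rank_span_le _
    _ ≤ (s : Cardinal) := by
        have h2 := Cardinal.mk_range_le_lift (f := g)
        simpa using h2
end
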